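/- Let 1 ≤ r ≤ d, let Θ ∈ ℝ^{d×r} satisfy ΘᵀΘ = I_r, and let g : ℝ^r → ℝ satisfy the Hölder condition |g(y) − g(y′)| ≤ C‖y − y′‖^α for all y, y′ ∈ ℝ^r, with constant C < ∞ and exponent 0 < α ≤ 1. Let f(x) = g(Θᵀx) and suppose σ² = Var(f(X)) > 0 for X ~ N(0, I_d). Then the mean dimension of f satisfies ν(f) ≤ (C/σ)² · 2^{α−1} · M_{2α} · Σ_{j=1}^d (Σ_{k=1}^r Θ_{jk}²)^α. -/

import Mathlib

open MeasureTheory ProbabilityTheory Real Filter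

noncomputable section

/-- Standard Gaussian measure `N(0, I_d)` on `ℝ^d`. -/
def stdGaussian (d : ℕ) : Measure (Fin d → ℝ) :=
  Measure.pi fun _ => gaussianReal 0 1

/-- Sobol' total index `τ̄²_j(f) = (1/2)·E[(f(X) − f(X_{−j}:Z_j))²]`. -/
def sobolTau (d : ℕ) (f : (Fin d → ℝ) → ℝ) (j : Fin d) : ℝ :=
  (1 / 2) * ∫ p : (Fin d → ℝ) × (Fin d → ℝ),
    (f p.1 - f (Function.update p.1 j (p.2 j))) ^ 2
      ∂((stdGaussian d).prod (stdGaussian d))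

/-- Mean dimension `ν(f) = (Σ_j τ̄²_j(f)) / Var(f(X))`. -/
def meanDim (d : ℕ) (f : (Fin d → ℝ) → ℝ) : ℝ :=
  (∑ j, sobolTau d f j) / variance f (stdGaussian d)

/-- Gaussian fractional absolute moment `M_η = 2^{η/2} Γ((η+1)/2) / √π`. -/
def Mmom (η : ℝ) : ℝ := 2 ^ (η / 2) / Real.sqrt π * Real.Gamma ((η + 1) / 2)

/-- Standard normal CDF `Φ`. -/
def Phi (t : ℝ) : ℝ := ((gaussianReal 0 1) (Set.Iic t)).toReal

/-- Standard normal density `φ`. -/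
def gpdf (x : ℝ) : ℝ := Real.exp (-x ^ 2 / 2) / Real.sqrt (2 * π)


-- Auxiliary lemmas





lemma integrable_aux {α : ℝ} (hα0 : 0 < α) (hα1 : α ≤ 1) :
    Integrable (fun t : ℝ => |t| ^ (2*α) * (Real.exp (-t^2/4) / (2*Real.sqrt π))) := by
  have hsπ : (1:ℝ) ≤ Real.sqrt π := by
    rw [show (1:ℝ) = Real.sqrt 1 by simp]
    exact Real.sqrt_le_sqrt (by nlinarith [Real.pi_gt_three])
  have hg : Integrable (fun t : ℝ => Real.exp (-(1/4)*t^2) + 8 * Real.exp (-(1/8)*t^2)) :=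
    (integrable_exp_neg_mul_sq (by norm_num)).add
      ((integrable_exp_neg_mul_sq (by norm_num)).const_mul 8)
  refine hg.mono' ?_ (Filter.Eventually.of_forall fun t => ?_)
  · apply Continuous.aestronglyMeasurable
    apply Continuous.mul
    · exact continuous_abs.rpow_const (fun x => Or.inr (by positivity))
    · fun_prop
  · have h0 : (0:ℝ) ≤ |t| ^ (2*α) := Real.rpow_nonneg (abs_nonneg t) _
    have hwpos : (0:ℝ) < Real.exp (-t^2/4) / (2*Real.sqrt π) := by positivity
    rw [Real.norm_eq_abs, abs_of_nonneg (by positivity)]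
    have habs : |t| ^ (2*α) ≤ 1 + t^2 := by
      rcases le_or_gt (|t|) 1 with h | h
      · have := Real.rpow_le_one (abs_nonneg t) h (by positivity : (0:ℝ) ≤ 2*α)
        nlinarith [sq_nonneg t]
      · have h2 : |t| ^ (2*α) ≤ |t| ^ (2:ℝ) :=
          Real.rpow_le_rpow_of_exponent_le h.le (by linarith)
        have h3 : |t| ^ (2:ℝ) = t^2 := by
          rw [show (2:ℝ) = ((2:ℕ):ℝ) by norm_num, Real.rpow_natCast, sq_abs]
        nlinarith
    have hstep1 : |t| ^ (2*α) * (Real.exp (-t^2/4) / (2*Real.sqrt π))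
        ≤ (1 + t^2) * Real.exp (-t^2/4) := by
      have : Real.exp (-t^2/4) / (2*Real.sqrt π) ≤ Real.exp (-t^2/4) := by
        rw [div_le_iff₀ (by positivity)]
        nlinarith [Real.exp_pos (-t^2/4)]
      calc |t| ^ (2*α) * (Real.exp (-t^2/4) / (2*Real.sqrt π))
          ≤ (1 + t^2) * (Real.exp (-t^2/4) / (2*Real.sqrt π)) := by
            apply mul_le_mul_of_nonneg_right habs hwpos.le
        _ ≤ (1 + t^2) * Real.exp (-t^2/4) := by
            apply mul_le_mul_of_nonneg_left this (by nlinarith [sq_nonneg t])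
    have h8 : t^2 * Real.exp (-t^2/4) ≤ 8 * Real.exp (-(1/8)*t^2) := by
      have key : t^2 ≤ 8 * Real.exp (t^2/8) := by
        nlinarith [Real.add_one_le_exp (t^2/8), Real.exp_pos (t^2/8)]
      calc t^2 * Real.exp (-t^2/4) ≤ 8 * Real.exp (t^2/8) * Real.exp (-t^2/4) := by
            apply mul_le_mul_of_nonneg_right key (Real.exp_pos _).le
        _ = 8 * Real.exp (-(1/8)*t^2) := by
            rw [mul_assoc, ← Real.exp_add]; ring_nf
    have hexp : Real.exp (-t^2/4) = Real.exp (-(1/4)*t^2) := by ring_nf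
    nlinarith [Real.exp_pos (-t^2/4), hstep1, h8]




lemma value_aux {α : ℝ} (hα0 : 0 < α) :
    ∫ t : ℝ, |t| ^ (2*α) * (Real.exp (-t^2/4) / (2*Real.sqrt π))
      = 2 ^ α * Mmom (2*α) := by
  have hsπ : (0:ℝ) < Real.sqrt π := Real.sqrt_pos.mpr Real.pi_pos
  have h1 : ∀ t : ℝ, |t| ^ (2*α) * (Real.exp (-t^2/4) / (2*Real.sqrt π))
      = (fun x : ℝ => x ^ (2*α) * Real.exp (-(1/4)*x^2)) |t| * (2*Real.sqrt π)⁻¹ := by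
    intro t
    simp only [sq_abs]
    rw [div_eq_mul_inv]
    ring_nf
  simp_rw [h1]
  rw [integral_mul_const]
  have habs := integral_comp_abs (f := fun x : ℝ => x ^ (2*α) * Real.exp (-(1/4)*x^2))
  beta_reduce at habs
  rw [habs]
  have h2 : ∫ x in Set.Ioi (0:ℝ), x ^ (2*α) * Real.exp (-(1/4)*x^2)
      = (1/4:ℝ) ^ (-(2*α+1)/2) * (1/2) * Real.Gamma ((2*α+1)/2) := by
    rw [← integral_rpow_mul_exp_neg_mul_rpow (by norm_num : (0:ℝ) < 2)
      (by linarith : (-1:ℝ) < 2*α) (by norm_num : (0:ℝ) < 1/4)]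
    refine setIntegral_congr_fun measurableSet_Ioi (fun x hx => ?_)
    rw [show x ^ (2:ℝ) = x ^ (2:ℕ) by
      rw [show (2:ℝ) = ((2:ℕ):ℝ) by norm_num, Real.rpow_natCast]]
  rw [h2]
  have h3 : (1/4:ℝ) ^ (-(2*α+1)/2) = 2 ^ (2*α+1) := by
    rw [show (1/4:ℝ) = (2:ℝ) ^ (-2:ℝ) by
      rw [Real.rpow_neg (by norm_num), show (2:ℝ) = ((2:ℕ):ℝ) by norm_num,
        Real.rpow_natCast]; norm_num]
    rw [← Real.rpow_mul (by norm_num)]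
    congr 1; ring
  rw [h3]
  have h4 : (2:ℝ) ^ (2*α+1) = 2 ^ α * 2 ^ α * 2 := by
    rw [Real.rpow_add (by norm_num), Real.rpow_one, ← Real.rpow_add (by norm_num)]
    ring_nf
  rw [Mmom, h4]
  have h5 : (2:ℝ) ^ (2*α/2) = 2 ^ α := by congr 1; ring
  rw [h5]
  have hπ : Real.sqrt π * Real.sqrt π = π := Real.mul_self_sqrt Real.pi_pos.le
  field_simp


lemma conv_aux (t : ℝ) :
    ∫⁻ a : ℝ, ENNReal.ofReal (gaussianPDFReal 0 1 a * gaussianPDFReal 0 1 (t + a))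
      = ENNReal.ofReal (Real.exp (-t^2/4) / (2*Real.sqrt π)) := by
  have h2π : (0:ℝ) < 2*π := by positivity
  have heq : ∀ a : ℝ, gaussianPDFReal 0 1 a * gaussianPDFReal 0 1 (t + a)
      = ((2*π)⁻¹ * Real.exp (-t^2/4)) * Real.exp (-1 * (a + t/2)^2) := by
    intro a
    simp only [gaussianPDFReal, NNReal.coe_one, mul_one, sub_zero]
    rw [show ((√(2*π))⁻¹ * rexp (-a^2/(2:ℝ))) * ((√(2*π))⁻¹ * rexp (-(t+a)^2/(2:ℝ)))
        = ((√(2*π))⁻¹ * (√(2*π))⁻¹) * (rexp (-a^2/(2:ℝ)) * rexp (-(t+a)^2/(2:ℝ))) by ring]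
    rw [← Real.exp_add, ← mul_inv, Real.mul_self_sqrt h2π.le,
      show -a^2/(2:ℝ) + -(t+a)^2/(2:ℝ) = -t^2/4 + -1*(a+t/2)^2 by ring,
      Real.exp_add]
    ring
  simp_rw [heq]
  have hint : Integrable (fun a : ℝ => ((2*π)⁻¹ * Real.exp (-t^2/4)) * Real.exp (-1 * (a + t/2)^2)) := by
    apply Integrable.const_mul
    exact (integrable_exp_neg_mul_sq (by norm_num : (0:ℝ) < 1)).comp_add_right (t/2)
  rw [← ofReal_integral_eq_lintegral_ofReal hint
    (Filter.Eventually.of_forall fun a => by positivity)]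
  congr 1
  rw [integral_const_mul]
  rw [integral_add_right_eq_self (fun x : ℝ => Real.exp (-1 * x^2)) (t/2)]
  rw [integral_gaussian]
  have hπ : Real.sqrt π * Real.sqrt π = π := Real.mul_self_sqrt Real.pi_pos.le
  have : Real.sqrt (π/1) = Real.sqrt π := by norm_num
  rw [this]
  field_simp
  nlinarith [hπ, Real.exp_pos (-t^2/4)]

lemma rpow_abs_meas {α : ℝ} (hα0 : 0 < α) : Measurable (fun t : ℝ => ENNReal.ofReal (|t| ^ (2*α))) :=
  ENNReal.measurable_ofReal.comp
    ((continuous_abs.rpow_const (fun x => Or.inr (by positivity))).measurable)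

lemma K_aux {α : ℝ} (hα0 : 0 < α) (hα1 : α ≤ 1) :
    ∫⁻ q : ℝ × ℝ, ENNReal.ofReal (|q.1 - q.2| ^ (2*α))
        ∂((gaussianReal 0 1).prod (gaussianReal 0 1))
      = ENNReal.ofReal (∫ t : ℝ, |t| ^ (2*α) * (Real.exp (-t^2/4) / (2*Real.sqrt π))) := by
  have hφm : Measurable (gaussianPDFReal 0 1) := measurable_gaussianPDFReal 0 1
  have hφ0 : ∀ x, 0 ≤ gaussianPDFReal 0 1 x := gaussianPDFReal_nonneg 0 1
  have hpdfm : Measurable (gaussianPDF 0 1) := measurable_gaussianPDF 0 1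
  have hrm : ∀ c : ℝ, Measurable (fun t : ℝ => ENNReal.ofReal (|c - t| ^ (2*α))) := by
    intro c
    exact ENNReal.measurable_ofReal.comp
      ((((continuous_const.sub continuous_id).abs).rpow_const
        (fun x => Or.inr (by positivity))).measurable)
  have hμ1 : gaussianReal 0 1 = volume.withDensity (gaussianPDF 0 1) :=
    gaussianReal_of_var_ne_zero 0 one_ne_zero
  have hmeas : Measurable (fun q : ℝ × ℝ => ENNReal.ofReal (|q.1 - q.2| ^ (2*α))) :=
    ENNReal.measurable_ofReal.comp
      ((((continuous_fst.sub continuous_snd).abs).rpow_const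
        (fun x => Or.inr (by positivity))).measurable)
  rw [lintegral_prod _ hmeas.aemeasurable]
  -- inner integral over b
  have inner_eq : ∀ a : ℝ, (∫⁻ b, ENNReal.ofReal (|a - b| ^ (2*α)) ∂(gaussianReal 0 1))
      = ∫⁻ t, gaussianPDF 0 1 (t + a) * ENNReal.ofReal (|t| ^ (2*α)) := by
    intro a
    rw [hμ1, lintegral_withDensity_eq_lintegral_mul _ hpdfm (hrm a)]
    have := lintegral_add_right_eq_self (μ := volume)
      (fun b : ℝ => (gaussianPDF 0 1 * fun b => ENNReal.ofReal (|a - b| ^ (2*α))) b) a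
    rw [← this]
    refine lintegral_congr fun t => ?_
    simp only [Pi.mul_apply]
    congr 2
    rw [show a - (t + a) = -t by ring, abs_neg]
  simp_rw [inner_eq]
  rw [hμ1, lintegral_withDensity_eq_lintegral_mul _ hpdfm]
  swap
  · apply Measurable.lintegral_prod_right
    exact (hpdfm.comp (measurable_snd.add measurable_fst)).mul
      ((rpow_abs_meas hα0).comp measurable_snd)
  simp only [Pi.mul_apply]
  have swap_eq : ∫⁻ a, gaussianPDF 0 1 a * ∫⁻ t, gaussianPDF 0 1 (t + a) * ENNReal.ofReal (|t| ^ (2*α))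
      = ∫⁻ t, ∫⁻ a, gaussianPDF 0 1 a * (gaussianPDF 0 1 (t + a) * ENNReal.ofReal (|t| ^ (2*α))) := by
    have hne : ∀ x : ℝ, gaussianPDF 0 1 x ≠ ⊤ := fun x => by
      rw [gaussianPDF_def]; exact ENNReal.ofReal_ne_top
    have pull : ∀ a : ℝ, gaussianPDF 0 1 a
          * (∫⁻ t, gaussianPDF 0 1 (t + a) * ENNReal.ofReal (|t| ^ (2*α)))
        = ∫⁻ t, gaussianPDF 0 1 a * (gaussianPDF 0 1 (t + a) * ENNReal.ofReal (|t| ^ (2*α))) :=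
      fun a => (lintegral_const_mul' _ _ (hne a)).symm
    simp_rw [pull]
    apply lintegral_lintegral_swap
    exact ((hpdfm.comp measurable_fst).mul
      ((hpdfm.comp (measurable_snd.add measurable_fst)).mul
        ((rpow_abs_meas hα0).comp measurable_snd))).aemeasurable
  rw [swap_eq]
  have inner2 : ∀ t : ℝ, (∫⁻ a, gaussianPDF 0 1 a * (gaussianPDF 0 1 (t + a) * ENNReal.ofReal (|t| ^ (2*α))))
      = ENNReal.ofReal (|t| ^ (2*α) * (Real.exp (-t^2/4) / (2*Real.sqrt π))) := by
    intro t
    have : ∀ a : ℝ, gaussianPDF 0 1 a * (gaussianPDF 0 1 (t + a) * ENNReal.ofReal (|t| ^ (2*α)))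
        = ENNReal.ofReal (gaussianPDFReal 0 1 a * gaussianPDFReal 0 1 (t + a))
            * ENNReal.ofReal (|t| ^ (2*α)) := by
      intro a
      rw [gaussianPDF_def, ← mul_assoc, ← ENNReal.ofReal_mul (hφ0 a)]
      try rfl
    simp_rw [this]
    rw [lintegral_mul_const' _ _ ENNReal.ofReal_ne_top, conv_aux t,
      ← ENNReal.ofReal_mul (by positivity)]
    try ring_nf
  simp_rw [inner2]
  rw [← ofReal_integral_eq_lintegral_ofReal (integrable_aux hα0 hα1)
    (Filter.Eventually.of_forall fun t => by positivity)]




instance (d : ℕ) : IsProbabilityMeasure (stdGaussian d) := by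
  unfold _root_.stdGaussian; infer_instance

lemma stdGaussian_map_eval (d : ℕ) (j : Fin d) :
    (stdGaussian d).map (fun x => x j) = gaussianReal 0 1 := by
  ext s hs
  rw [Measure.map_apply (measurable_pi_apply j) hs, _root_.stdGaussian]
  have hpre : (fun x : Fin d → ℝ => x j) ⁻¹' s
      = Set.pi Set.univ (Function.update (fun _ : Fin d => (Set.univ : Set ℝ)) j s) := by
    ext x
    simp only [Set.mem_preimage, Set.mem_pi, Set.mem_univ, true_implies,
      Function.update_apply]
    constructor
    · intro hx i
      by_cases hij : i = j
      · simp [hij, hx]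
      · simp [hij]
    · intro hx
      have := hx j
      simpa using this
  rw [hpre, Measure.pi_pi]
  rw [Finset.prod_eq_single j
    (fun i _ hij => by rw [Function.update_of_ne hij]; exact measure_univ)
    (fun h => absurd (Finset.mem_univ j) h)]
  rw [Function.update_self]

lemma map_pair (d : ℕ) (j : Fin d) :
    ((stdGaussian d).prod (stdGaussian d)).map
        (fun p : (Fin d → ℝ) × (Fin d → ℝ) => (p.1 j, p.2 j))
      = (gaussianReal 0 1).prod (gaussianReal 0 1) := by
  rw [← stdGaussian_map_eval d j,
    Measure.map_prod_map _ _ (measurable_pi_apply j) (measurable_pi_apply j)]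
  rfl

lemma bridge (d : ℕ) (j : Fin d) {α : ℝ} (hα0 : 0 < α) (hα1 : α ≤ 1) :
    Integrable (fun p : (Fin d → ℝ) × (Fin d → ℝ) => |p.1 j - p.2 j| ^ (2*α))
        ((stdGaussian d).prod (stdGaussian d))
    ∧ ∫ p : (Fin d → ℝ) × (Fin d → ℝ), |p.1 j - p.2 j| ^ (2*α)
        ∂((stdGaussian d).prod (stdGaussian d)) = 2 ^ α * Mmom (2*α) := by
  have hT : Measurable (fun p : (Fin d → ℝ) × (Fin d → ℝ) => (p.1 j, p.2 j)) :=
    ((measurable_pi_apply j).comp measurable_fst).prodMk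
      ((measurable_pi_apply j).comp measurable_snd)
  have hcont : Continuous (fun q : ℝ × ℝ => |q.1 - q.2| ^ (2*α)) :=
    ((continuous_fst.sub continuous_snd).abs).rpow_const (fun x => Or.inr (by positivity))
  have hnn : (0:ℝ) ≤ ∫ t : ℝ, |t| ^ (2*α) * (Real.exp (-t^2/4) / (2*Real.sqrt π)) :=
    integral_nonneg fun t => by positivity
  have hint2 : Integrable (fun q : ℝ × ℝ => |q.1 - q.2| ^ (2*α))
      ((gaussianReal 0 1).prod (gaussianReal 0 1)) := by
    refine ⟨hcont.aestronglyMeasurable, ?_⟩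
    rw [hasFiniteIntegral_iff_ofReal
      (Filter.Eventually.of_forall fun q => Real.rpow_nonneg (abs_nonneg _) _)]
    rw [K_aux hα0 hα1]
    exact ENNReal.ofReal_lt_top
  have hval2 : ∫ q : ℝ × ℝ, |q.1 - q.2| ^ (2*α)
      ∂((gaussianReal 0 1).prod (gaussianReal 0 1)) = 2 ^ α * Mmom (2*α) := by
    rw [integral_eq_lintegral_of_nonneg_ae
      (Filter.Eventually.of_forall fun q => Real.rpow_nonneg (abs_nonneg _) _)
      hcont.aestronglyMeasurable]
    rw [K_aux hα0 hα1, ENNReal.toReal_ofReal hnn, value_aux hα0]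
  constructor
  · have := (integrable_map_measure (μ := (stdGaussian d).prod (stdGaussian d)) (f := fun p : (Fin d → ℝ) × (Fin d → ℝ) => (p.1 j, p.2 j))
      (g := fun q : ℝ × ℝ => |q.1 - q.2| ^ (2*α)) ?_ hT.aemeasurable).mp ?_
    · exact this
    · rw [map_pair d j]; exact hcont.aestronglyMeasurable
    · rw [map_pair d j]; exact hint2
  · have := integral_map (μ := (stdGaussian d).prod (stdGaussian d)) (φ := fun p : (Fin d → ℝ) × (Fin d → ℝ) => (p.1 j, p.2 j))
      (f := fun q : ℝ × ℝ => |q.1 - q.2| ^ (2*α)) hT.aemeasurable ?_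
    · rw [map_pair d j] at this
      rw [← this, hval2]
    · rw [map_pair d j]; exact hcont.aestronglyMeasurable


lemma pointwise_bound {d r : ℕ} (Θ : Matrix (Fin d) (Fin r) ℝ)
    (g : (Fin r → ℝ) → ℝ) (C α : ℝ) (hα0 : 0 < α)
    (hg : ∀ y y' : Fin r → ℝ,
      |g y - g y'| ≤ C * (∑ k, (y k - y' k) ^ 2) ^ (α / 2))
    (f : (Fin d → ℝ) → ℝ) (hf : ∀ x, f x = g (fun k => ∑ j, Θ j k * x j))
    (j : Fin d) (x z : Fin d → ℝ) :
    (f x - f (Function.update x j (z j))) ^ 2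
      ≤ C ^ 2 * (∑ k, Θ j k ^ 2) ^ α * |x j - z j| ^ (2*α) := by
  set S : ℝ := ∑ k, Θ j k ^ 2 with hSdef
  have hS : 0 ≤ S := Finset.sum_nonneg fun k _ => sq_nonneg _
  set t : ℝ := x j - z j with htdef
  have hy : ∀ k, (∑ i, Θ i k * x i) - (∑ i, Θ i k * (Function.update x j (z j)) i)
      = Θ j k * t := by
    intro k
    rw [← Finset.sum_sub_distrib, Finset.sum_eq_single j
      (fun i _ hij => by rw [Function.update_of_ne hij]; ring)
      (fun h => absurd (Finset.mem_univ j) h)]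
    rw [Function.update_self]
    ring
  have h1 := hg (fun k => ∑ i, Θ i k * x i)
    (fun k => ∑ i, Θ i k * (Function.update x j (z j)) i)
  have hsum : (∑ k, ((fun k => ∑ i, Θ i k * x i) k
      - (fun k => ∑ i, Θ i k * (Function.update x j (z j)) i) k) ^ 2) = S * t ^ 2 := by
    rw [hSdef, Finset.sum_mul]
    refine Finset.sum_congr rfl fun k _ => ?_
    simp only
    rw [hy k]
    ring
  rw [hsum] at h1
  rw [hf x, hf (Function.update x j (z j))]
  have h2 : (g (fun k => ∑ i, Θ i k * x i)
        - g (fun k => ∑ i, Θ i k * (Function.update x j (z j)) i)) ^ 2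
      ≤ (C * (S * t ^ 2) ^ (α / 2)) ^ 2 := by
    rw [← sq_abs]
    exact pow_le_pow_left₀ (abs_nonneg _) h1 2
  refine h2.trans (le_of_eq ?_)
  have hA : ((S * t ^ 2 : ℝ) ^ (α / 2)) ^ 2 = (S * t ^ 2) ^ α := by
    rw [← Real.rpow_natCast ((S * t ^ 2) ^ (α / 2)) 2, ← Real.rpow_mul (by positivity)]
    norm_num
  have hB : (S * t ^ 2 : ℝ) ^ α = S ^ α * |t| ^ (2*α) := by
    rw [Real.mul_rpow hS (sq_nonneg t), ← sq_abs t,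
      ← Real.rpow_natCast |t| 2, ← Real.rpow_mul (abs_nonneg t)]
    norm_num
  rw [mul_pow, hA, hB]
  ring


/-- Theorem 3.1 (Hölder ridge functions): upper bound on the mean dimension. -/
theorem stmt0 (d r : ℕ) (hr : 1 ≤ r) (hrd : r ≤ d)
    (Θ : Matrix (Fin d) (Fin r) ℝ) (hΘ : Θ.transpose * Θ = 1)
    (g : (Fin r → ℝ) → ℝ) (C α : ℝ) (hα0 : 0 < α) (hα1 : α ≤ 1)
    (hg : ∀ y y' : Fin r → ℝ,
      |g y - g y'| ≤ C * (∑ k, (y k - y' k) ^ 2) ^ (α / 2))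
    (f : (Fin d → ℝ) → ℝ) (hf : ∀ x, f x = g (fun k => ∑ j, Θ j k * x j))
    (hσ : 0 < variance f (stdGaussian d)) :
    meanDim d f ≤ (C / Real.sqrt (variance f (stdGaussian d))) ^ 2
      * 2 ^ (α - 1) * Mmom (2 * α) * ∑ j, (∑ k, Θ j k ^ 2) ^ α := by
  have P := (stdGaussian d).prod (stdGaussian d)
  have hj : ∀ j : Fin d, sobolTau d f j
      ≤ C ^ 2 * 2 ^ (α - 1) * Mmom (2 * α) * (∑ k, Θ j k ^ 2) ^ α := by
    intro j
    obtain ⟨hInt, hVal⟩ := bridge d j hα0 hα1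
    have hS : (0:ℝ) ≤ ∑ k, Θ j k ^ 2 := Finset.sum_nonneg fun k _ => sq_nonneg _
    have hmono : (∫ p : (Fin d → ℝ) × (Fin d → ℝ),
          (f p.1 - f (Function.update p.1 j (p.2 j))) ^ 2
            ∂((stdGaussian d).prod (stdGaussian d)))
        ≤ ∫ p : (Fin d → ℝ) × (Fin d → ℝ),
            C ^ 2 * (∑ k, Θ j k ^ 2) ^ α * |p.1 j - p.2 j| ^ (2*α)
            ∂((stdGaussian d).prod (stdGaussian d)) := by
      apply integral_mono_of_nonneg
      · exact Filter.Eventually.of_forall fun p => sq_nonneg _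
      · exact hInt.const_mul _
      · exact Filter.Eventually.of_forall fun p =>
          pointwise_bound Θ g C α hα0 hg f hf j p.1 p.2
    have hval2 : (∫ p : (Fin d → ℝ) × (Fin d → ℝ),
          C ^ 2 * (∑ k, Θ j k ^ 2) ^ α * |p.1 j - p.2 j| ^ (2*α)
          ∂((stdGaussian d).prod (stdGaussian d)))
        = C ^ 2 * (∑ k, Θ j k ^ 2) ^ α * (2 ^ α * Mmom (2*α)) := by
      rw [integral_const_mul, hVal]
    unfold sobolTau
    calc (1/2 : ℝ) * ∫ p : (Fin d → ℝ) × (Fin d → ℝ),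
          (f p.1 - f (Function.update p.1 j (p.2 j))) ^ 2
            ∂((stdGaussian d).prod (stdGaussian d))
        ≤ (1/2 : ℝ) * (C ^ 2 * (∑ k, Θ j k ^ 2) ^ α * (2 ^ α * Mmom (2*α))) := by
          apply mul_le_mul_of_nonneg_left _ (by norm_num)
          rw [← hval2]
          exact hmono
      _ = C ^ 2 * 2 ^ (α - 1) * Mmom (2 * α) * (∑ k, Θ j k ^ 2) ^ α := by
          rw [Real.rpow_sub (by norm_num : (0:ℝ) < 2), Real.rpow_one]
          ring
  have hsum : (∑ j, sobolTau d f j)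
      ≤ C ^ 2 * 2 ^ (α - 1) * Mmom (2 * α) * ∑ j, (∑ k, Θ j k ^ 2) ^ α := by
    rw [Finset.mul_sum]
    exact Finset.sum_le_sum fun j _ => hj j
  unfold meanDim
  calc (∑ j, sobolTau d f j) / variance f (stdGaussian d)
      ≤ (C ^ 2 * 2 ^ (α - 1) * Mmom (2 * α) * ∑ j, (∑ k, Θ j k ^ 2) ^ α)
          / variance f (stdGaussian d) := by gcongr
    _ = (C / Real.sqrt (variance f (stdGaussian d))) ^ 2
          * 2 ^ (α - 1) * Mmom (2 * α) * ∑ j, (∑ k, Θ j k ^ 2) ^ α := by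
        rw [div_pow, Real.sq_sqrt hσ.le]
        field_simp


end
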